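/- Let X be a finite set in ℝ^d whose pairwise squared distances all lie in an algebraic number field K ⊆ ℝ. Then there exists a finite extension field L of K and a congruent copy of X (an isometric embedding of X into ℝ^n for n = |X|) such that every coordinate of every point lies in L. -/

import Mathlib

set_option maxHeartbeats 1000000
set_option synthInstance.maxHeartbeats 400000

open RealInnerProductSpace

local notation "𝔸" => algebraicClosure ℚ ℝ

private lemma mem_A_of_sq {x : ℝ} (h : x ^ 2 ∈ 𝔸) : x ∈ 𝔸 := by
  rw [mem_algebraicClosure_iff'] at h ⊢
  exact IsIntegral.of_pow (by norm_num) h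

private lemma sum_apply' {n : ℕ} {ι : Type*} [Fintype ι] (f : ι → ℝ)
    (z : ι → EuclideanSpace ℝ (Fin n)) (k : Fin n) :
    (∑ i, f i • z i) k = ∑ i, f i * z i k := by
  induction (Finset.univ : Finset ι) using Finset.cons_induction with
  | empty => simp
  | cons a s ha ih => rw [Finset.sum_cons, Finset.sum_cons, ← ih]; rfl

private lemma gram_transfer {E₁ E₂ : Type*} [NormedAddCommGroup E₁] [InnerProductSpace ℝ E₁]
    [NormedAddCommGroup E₂] [InnerProductSpace ℝ E₂] {ι : Type*} [Fintype ι]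
    {u : ι → E₁} {v : ι → E₂} (h : ∀ i j, ⟪v i, v j⟫ = ⟪u i, u j⟫) (f g : ι → ℝ) :
    ⟪∑ i, f i • v i, ∑ j, g j • v j⟫ = ⟪∑ i, f i • u i, ∑ j, g j • u j⟫ := by
  simp only [sum_inner, inner_sum, real_inner_smul_left, real_inner_smul_right, h]

private lemma gram_transfer_zero {E₁ E₂ : Type*} [NormedAddCommGroup E₁] [InnerProductSpace ℝ E₁]
    [NormedAddCommGroup E₂] [InnerProductSpace ℝ E₂] {ι : Type*} [Fintype ι]
    {u : ι → E₁} {v : ι → E₂} (h : ∀ i j, ⟪v i, v j⟫ = ⟪u i, u j⟫) (f : ι → ℝ)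
    (hf : ∑ i, f i • u i = 0) : ∑ i, f i • v i = 0 := by
  have h0 : ⟪∑ i, f i • v i, ∑ i, f i • v i⟫ = 0 := by
    rw [gram_transfer h f f, hf]; simp
  exact inner_self_eq_zero.mp h0

private noncomputable def pad {n : ℕ} (w : EuclideanSpace ℝ (Fin n)) :
    EuclideanSpace ℝ (Fin (n + 1)) := WithLp.toLp 2 (Fin.snoc w.ofLp 0)

private lemma pad_inner {n : ℕ} (a b : EuclideanSpace ℝ (Fin n)) : ⟪pad a, pad b⟫ = ⟪a, b⟫ := by
  simp [pad, PiLp.inner_apply, Fin.sum_univ_castSucc]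

private lemma pad_inner_single {n : ℕ} (a : EuclideanSpace ℝ (Fin n)) :
    ⟪pad a, EuclideanSpace.single (Fin.last n) (1 : ℝ)⟫ = 0 := by
  simp [pad, PiLp.inner_apply, Fin.sum_univ_castSucc]

private lemma gram_realize {d : ℕ} (n : ℕ) (u : Fin n → EuclideanSpace ℝ (Fin d))
    (halg : ∀ i j, ⟪u i, u j⟫ ∈ 𝔸) :
    ∃ v : Fin n → EuclideanSpace ℝ (Fin n),
      (∀ i j, ⟪v i, v j⟫ = ⟪u i, u j⟫) ∧ ∀ i k, v i k ∈ 𝔸 := by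
  induction n with
  | zero => exact ⟨fun _ => 0, fun i => i.elim0, fun i => i.elim0⟩
  | succ n ih =>
    set U : Fin n → EuclideanSpace ℝ (Fin d) := u ∘ Fin.castSucc with hUdef
    set uL : EuclideanSpace ℝ (Fin d) := u (Fin.last n) with huLdef
    obtain ⟨v', hg', ha'⟩ := ih U (fun i j => halg _ _)
    obtain ⟨s, hsub, hspan, hind⟩ := exists_linearIndependent ℝ (Set.range U)
    haveI : Fintype s := ((Set.finite_range U).subset hsub).fintype
    choose ind hindeq using fun a : s => hsub a.2
    -- hindeq : ∀ a : s, U (ind a) = ↑a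
    have hGind : ∀ x b : s, ⟪v' (ind x), v' (ind b)⟫
        = ⟪(x : EuclideanSpace ℝ (Fin d)), (b : EuclideanSpace ℝ (Fin d))⟫ := by
      intro x b; rw [hg', hindeq, hindeq]
    -- kernel lemma
    have hker : ∀ e : s → ℝ,
        (∀ b : s, ∑ x : s, e x * ⟪(x : EuclideanSpace ℝ (Fin d)), (b : EuclideanSpace ℝ (Fin d))⟫ = 0) →
        ∀ x, e x = 0 := by
      intro e he
      have h1 : ∀ b : s, ⟪(∑ x : s, e x • (x : EuclideanSpace ℝ (Fin d))),
          e b • (b : EuclideanSpace ℝ (Fin d))⟫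
          = e b * ∑ x : s, e x * ⟪(x : EuclideanSpace ℝ (Fin d)), (b : EuclideanSpace ℝ (Fin d))⟫ := by
        intro b; simp only [real_inner_smul_right, sum_inner, real_inner_smul_left]
        rw [Finset.mul_sum]
      have h0 : (∑ x : s, e x • (x : EuclideanSpace ℝ (Fin d))) = 0 := by
        rw [← inner_self_eq_zero (𝕜 := ℝ), inner_sum]
        simp only [h1, he, mul_zero, Finset.sum_const_zero]
      exact Fintype.linearIndependent_iff.mp hind e h0
    -- matrix over 𝔸
    have hM : ∀ a b : s, ⟪v' (ind a), v' (ind b)⟫ ∈ 𝔸 := by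
      intro a b; rw [hg']; exact halg _ _
    have hβ : ∀ a : s, ⟪uL, (a : EuclideanSpace ℝ (Fin d))⟫ ∈ 𝔸 := by
      intro a; rw [← hindeq a]; exact halg _ _
    set M : Matrix s s 𝔸 := fun a b => ⟨_, hM a b⟩ with hMdef
    set β : s → 𝔸 := fun a => ⟨_, hβ a⟩ with hβdef
    have hMcoe : ∀ a b : s, (algebraMap 𝔸 ℝ) (M a b) = ⟪v' (ind a), v' (ind b)⟫ := fun _ _ => rfl
    have hβcoe : ∀ a : s, (algebraMap 𝔸 ℝ) (β a) = ⟪uL, (a : EuclideanSpace ℝ (Fin d))⟫ :=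
      fun _ => rfl
    have hker0 : ∀ c : s → 𝔸, M.mulVecLin c = 0 → c = 0 := by
      intro c hc
      have hcb : ∀ b : s, ∑ x : s, (c x : ℝ)
          * ⟪(x : EuclideanSpace ℝ (Fin d)), (b : EuclideanSpace ℝ (Fin d))⟫ = 0 := by
        intro b
        have h2 := congrArg (algebraMap 𝔸 ℝ) (congrFun hc b)
        simp only [Matrix.mulVecLin_apply, Matrix.mulVec, dotProduct, map_sum, map_mul,
          Pi.zero_apply, map_zero, hMcoe, hGind] at h2
        rw [← h2]
        exact Finset.sum_congr rfl fun x _ => by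
          rw [mul_comm, real_inner_comm, IntermediateField.algebraMap_apply]
      have := hker (fun x => (c x : ℝ)) hcb
      funext x
      exact Subtype.ext (this x)
    have hinj : Function.Injective M.mulVecLin :=
      LinearMap.ker_eq_bot.mp (LinearMap.ker_eq_bot'.mpr hker0)
    obtain ⟨c, hc⟩ := (LinearMap.injective_iff_surjective.mp hinj) β
    set w : EuclideanSpace ℝ (Fin n) := ∑ x : s, (c x : ℝ) • v' (ind x) with hwdef
    have hc' : ∀ b : s, ∑ x : s, (c x : ℝ)
        * ⟪(x : EuclideanSpace ℝ (Fin d)), (b : EuclideanSpace ℝ (Fin d))⟫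
        = ⟪uL, (b : EuclideanSpace ℝ (Fin d))⟫ := by
      intro b
      have h2 := congrArg (algebraMap 𝔸 ℝ) (congrFun hc b)
      simp only [Matrix.mulVecLin_apply, Matrix.mulVec, dotProduct, map_sum, map_mul,
        hMcoe, hβcoe, hGind] at h2
      rw [← h2]
      exact Finset.sum_congr rfl fun x _ => by
        rw [mul_comm, real_inner_comm, IntermediateField.algebraMap_apply]
    have hA : ∀ b : s, ⟪w, v' (ind b)⟫ = ⟪uL, (b : EuclideanSpace ℝ (Fin d))⟫ := by
      intro b
      rw [hwdef, sum_inner]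
      simp only [real_inner_smul_left]
      rw [← hc' b]
      exact Finset.sum_congr rfl fun x _ => by rw [hGind]
    -- orthogonal projection
    haveI : FiniteDimensional ℝ (Submodule.span ℝ s) :=
      FiniteDimensional.span_of_finite ℝ ((Set.finite_range U).subset hsub)
    set p : EuclideanSpace ℝ (Fin d) := ((Submodule.orthogonalProjectionOnto (Submodule.span ℝ s) uL : Submodule.span ℝ s) : EuclideanSpace ℝ (Fin d)) with hpdef
    have hpmem : p ∈ Submodule.span ℝ s := SetLike.coe_mem _
    obtain ⟨a, ha⟩ : ∃ a : s → ℝ, ∑ x : s, a x • (x : EuclideanSpace ℝ (Fin d)) = p := by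
      have h1 : p ∈ Submodule.span ℝ (Set.range ((↑) : s → EuclideanSpace ℝ (Fin d))) := by
        rwa [Subtype.range_coe]
      exact (Submodule.mem_span_range_iff_exists_fun ℝ).mp h1
    have hprj : ∀ b : s, ⟪p, (b : EuclideanSpace ℝ (Fin d))⟫
        = ⟪uL, (b : EuclideanSpace ℝ (Fin d))⟫ := by
      intro b
      have h0 := Submodule.starProjection_inner_eq_zero (K := Submodule.span ℝ s) uL
        (b : EuclideanSpace ℝ (Fin d)) (Submodule.subset_span b.2)
      rw [inner_sub_left] at h0
      rw [Submodule.starProjection_apply, ← hpdef] at h0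
      linarith
    have haprj : ∀ b : s, ∑ x : s, a x
        * ⟪(x : EuclideanSpace ℝ (Fin d)), (b : EuclideanSpace ℝ (Fin d))⟫
        = ⟪uL, (b : EuclideanSpace ℝ (Fin d))⟫ := by
      intro b
      rw [← hprj b, ← ha, sum_inner]
      simp only [real_inner_smul_left]
    -- w equals projection image
    have hwy : ∀ x : s, (c x : ℝ) = a x := by
      have he := hker (fun x => (c x : ℝ) - a x) (fun b => by
        simp only [sub_mul, Finset.sum_sub_distrib, hc' b, haprj b, sub_self])
      intro x
      have h6 : (c x : ℝ) - a x = 0 := he x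
      linarith
    have hwle : ⟪w, w⟫ ≤ ⟪uL, uL⟫ := by
      have h1 : w = ∑ x : s, a x • v' (ind x) := by
        rw [hwdef]; exact Finset.sum_congr rfl fun x _ => by rw [hwy x]
      have h2 : ⟪w, w⟫ = ⟪p, p⟫ := by
        rw [h1, ← ha]
        exact gram_transfer (fun i j => hGind i j) a a
      rw [h2]
      have h3 := Submodule.starProjection_inner_eq_zero (K := Submodule.span ℝ s) uL p hpmem
      rw [inner_sub_left, Submodule.starProjection_apply, ← hpdef] at h3
      have h4 : (0:ℝ) ≤ ⟪uL - p, uL - p⟫ := real_inner_self_nonneg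
      rw [real_inner_sub_sub_self] at h4
      linarith
    have key_a : ∀ i : Fin n, ⟪w, v' i⟫ = ⟪uL, U i⟫ := by
      intro i
      obtain ⟨g, hgU⟩ : ∃ g : s → ℝ, ∑ x : s, g x • (x : EuclideanSpace ℝ (Fin d)) = U i := by
        have h1 : U i ∈ Submodule.span ℝ s := by
          rw [hspan]; exact Submodule.subset_span ⟨i, rfl⟩
        rw [← Subtype.range_coe (s := s)] at h1
        exact (Submodule.mem_span_range_iff_exists_fun ℝ).mp h1
      have hvi : v' i = ∑ x : s, g x • v' (ind x) := by
        have hz : ∑ o : Option s, (Option.elim o 1 (fun x => -g x))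
            • (U (Option.elim o i ind)) = 0 := by
          rw [Fintype.sum_option]
          simp only [Option.elim]
          rw [show ∀ z : EuclideanSpace ℝ (Fin d), (1:ℝ) • z = z from fun z => one_smul ℝ z]
          have : ∑ x : s, (-g x) • U (ind x) = -∑ x : s, g x • (x : EuclideanSpace ℝ (Fin d)) := by
            rw [← Finset.sum_neg_distrib]
            exact Finset.sum_congr rfl fun x _ => by rw [hindeq, neg_smul]
          rw [this, hgU]
          simp
        have hzz := gram_transfer_zero
          (u := fun o : Option s => U (Option.elim o i ind))
          (v := fun o : Option s => v' (Option.elim o i ind))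
          (fun o o' => hg' _ _) _ hz
        rw [Fintype.sum_option] at hzz
        simp only [Option.elim] at hzz
        rw [show ∀ z : EuclideanSpace ℝ (Fin n), (1:ℝ) • z = z from fun z => one_smul ℝ z] at hzz
        have h5 : ∑ x : s, (-g x) • v' (ind x) = -∑ x : s, g x • v' (ind x) := by
          rw [← Finset.sum_neg_distrib]
          exact Finset.sum_congr rfl fun x _ => by rw [neg_smul]
        rw [h5] at hzz
        linear_combination (norm := module) hzz
      rw [hvi, inner_sum]
      simp only [real_inner_smul_right, hA]
      rw [← hgU, inner_sum]
      simp only [real_inner_smul_right]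
    -- assemble
    set t : ℝ := Real.sqrt (⟪uL, uL⟫ - ⟪w, w⟫) with htdef
    have ht2 : t ^ 2 = ⟪uL, uL⟫ - ⟪w, w⟫ := Real.sq_sqrt (by linarith)
    set eL : EuclideanSpace ℝ (Fin (n + 1)) := EuclideanSpace.single (Fin.last n) (1 : ℝ) with heLdef
    have heL1 : ⟪eL, eL⟫ = 1 := by simp [heLdef, PiLp.inner_apply, EuclideanSpace.single_apply]
    have hpadeL : ∀ a : EuclideanSpace ℝ (Fin n), ⟪pad a, eL⟫ = 0 := fun a => by
      rw [heLdef]; exact pad_inner_single a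
    have hpadeL' : ∀ a : EuclideanSpace ℝ (Fin n), ⟪eL, pad a⟫ = 0 := fun a => by
      rw [real_inner_comm]; exact hpadeL a
    set vL : EuclideanSpace ℝ (Fin (n + 1)) := pad w + t • eL with hvLdef
    refine ⟨Fin.snoc (fun i => pad (v' i)) vL, ?_, ?_⟩
    · intro i j
      induction i using Fin.lastCases with
      | last =>
        induction j using Fin.lastCases with
        | last =>
          rw [Fin.snoc_last]
          rw [hvLdef, real_inner_add_add_self, pad_inner, real_inner_smul_right,
            hpadeL, real_inner_smul_left, real_inner_smul_right, heL1]
          rw [← huLdef]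
          nlinarith [ht2]
        | cast j =>
          rw [Fin.snoc_last, Fin.snoc_castSucc]
          rw [hvLdef, inner_add_left, real_inner_smul_left, pad_inner, hpadeL']
          rw [key_a j]
          simp [hUdef, huLdef]
      | cast i =>
        induction j using Fin.lastCases with
        | last =>
          rw [Fin.snoc_last, Fin.snoc_castSucc]
          rw [real_inner_comm, hvLdef, inner_add_left, real_inner_smul_left, pad_inner,
            hpadeL']
          rw [key_a i, real_inner_comm uL]
          simp [hUdef, huLdef]
        | cast j =>
          rw [Fin.snoc_castSucc, Fin.snoc_castSucc, pad_inner, hg']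
          simp [hUdef]
    · intro i k
      induction i using Fin.lastCases with
      | last =>
        rw [Fin.snoc_last]
        have hwk : ∀ k', w k' ∈ 𝔸 := by
          intro k'
          rw [hwdef, sum_apply']
          exact sum_mem fun x _ => mul_mem (SetLike.coe_mem (c x)) (ha' (ind x) k')
        have hvLk : vL k = (pad w) k + t * eL k := rfl
        rw [hvLk]
        induction k using Fin.lastCases with
        | last =>
          have h1 : (pad w) (Fin.last n) = 0 := by simp [pad]
          have h2 : eL (Fin.last n) = 1 := by simp [heLdef, EuclideanSpace.single_apply]
          rw [h1, h2, zero_add, mul_one]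
          apply mem_A_of_sq
          rw [ht2]
          refine sub_mem (halg _ _) ?_
          have : ⟪w, w⟫ = ∑ k', w k' * w k' := by
            rw [PiLp.inner_apply]; simp [sq]
          rw [this]
          exact sum_mem fun k' _ => mul_mem (hwk k') (hwk k')
        | cast k =>
          have h1 : (pad w) (Fin.castSucc k) = w k := by simp [pad]
          have h2 : eL (Fin.castSucc k) = 0 := by
            simp [heLdef, EuclideanSpace.single_apply, (Fin.castSucc_lt_last k).ne]
          rw [h1, h2, mul_zero, add_zero]
          exact hwk k
      | cast i =>
        rw [Fin.snoc_castSucc]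
        induction k using Fin.lastCases with
        | last => simpa [pad] using zero_mem 𝔸
        | cast k =>
          have h1 : (pad (v' i)) (Fin.castSucc k) = v' i k := by simp [pad]
          rw [h1]; exact ha' i k

theorem exists_coords_in_finite_extension (K : IntermediateField ℚ ℝ) [FiniteDimensional ℚ K]
    (d : ℕ) (X : Finset (EuclideanSpace ℝ (Fin d)))
    (hX : ∀ x ∈ X, ∀ y ∈ X, x ≠ y → dist x y ^ 2 ∈ K) :
    ∃ (L : IntermediateField ℚ ℝ) (φ : EuclideanSpace ℝ (Fin d) → EuclideanSpace ℝ (Fin X.card)),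
      FiniteDimensional ℚ L ∧ K ≤ L ∧
      (∀ x ∈ X, ∀ y ∈ X, dist (φ x) (φ y) = dist x y) ∧
      (∀ x ∈ X, ∀ i : Fin X.card, φ x i ∈ L) := by
  classical
  have hKA : ∀ r : ℝ, r ∈ K → r ∈ 𝔸 := by
    intro r hr
    rw [mem_algebraicClosure_iff']
    have h1 : IsIntegral ℚ (⟨r, hr⟩ : K) := IsIntegral.of_finite ℚ _
    simpa using h1.map K.val
  rcases Nat.eq_zero_or_pos X.card with hc | hc
  · have hXe : X = ∅ := Finset.card_eq_zero.mp hc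
    refine ⟨K, fun _ => 0, inferInstance, le_refl K, ?_, ?_⟩
    · intro a ha; rw [hXe] at ha; simp at ha
    · intro a ha; rw [hXe] at ha; simp at ha
  · set e := X.equivFin with hedef
    set pt : Fin X.card → EuclideanSpace ℝ (Fin d) := fun i => (e.symm i : _) with hptdef
    have hpt_mem : ∀ i, pt i ∈ X := fun i => (e.symm i).2
    have hpt_inj : Function.Injective pt := fun i j h => by
      apply e.symm.injective; exact Subtype.ext h
    set i0 : Fin X.card := ⟨0, hc⟩ with hi0def
    set u : Fin X.card → EuclideanSpace ℝ (Fin d) := fun i => pt i - pt i0 with hudef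
    have hdistK : ∀ i j, dist (pt i) (pt j) ^ 2 ∈ 𝔸 := by
      intro i j
      rcases eq_or_ne i j with rfl | hne
      · simp only [dist_self]
        simpa using zero_mem 𝔸
      · exact hKA _ (hX _ (hpt_mem i) _ (hpt_mem j) fun hxy => hne (hpt_inj hxy))
    have halg : ∀ i j, ⟪u i, u j⟫ ∈ 𝔸 := by
      intro i j
      have hid : ⟪u i, u j⟫ = (dist (pt i) (pt i0) ^ 2 + dist (pt j) (pt i0) ^ 2
          - dist (pt i) (pt j) ^ 2) / 2 := by
        have c1 := real_inner_comm (pt i) (pt j)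
        have c2 := real_inner_comm (pt i) (pt i0)
        have c3 := real_inner_comm (pt j) (pt i0)
        simp only [hudef, dist_eq_norm, ← real_inner_self_eq_norm_sq, inner_sub_left,
          inner_sub_right]
        linarith
      rw [hid]
      exact div_mem (sub_mem (add_mem (hdistK i i0) (hdistK j i0)) (hdistK i j))
        (by exact_mod_cast intCast_mem 𝔸 2)
    obtain ⟨v, hgram, hcoords⟩ := gram_realize X.card u halg
    have hdist : ∀ i j, dist (v i) (v j) = dist (pt i) (pt j) := by
      intro i j
      have h2 : pt i - pt j = u i - u j := by simp only [hudef]; abel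
      have h1 : ⟪v i - v j, v i - v j⟫ = ⟪pt i - pt j, pt i - pt j⟫ := by
        rw [h2, real_inner_sub_sub_self, real_inner_sub_sub_self, hgram, hgram, hgram]
      rw [dist_eq_norm, dist_eq_norm, norm_eq_sqrt_real_inner, norm_eq_sqrt_real_inner, h1]
    set S : Set ℝ := Set.range (fun p : Fin X.card × Fin X.card => v p.1 p.2) with hSdef
    haveI : Finite S := Set.finite_range _
    haveI : FiniteDimensional ℚ (IntermediateField.adjoin ℚ S) := by
      apply IntermediateField.finiteDimensional_adjoin
      rintro r ⟨⟨i, k⟩, rfl⟩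
      exact mem_algebraicClosure_iff'.mp (hcoords i k)
    refine ⟨K ⊔ IntermediateField.adjoin ℚ S,
      fun z => if h : z ∈ X then v (e ⟨z, h⟩) else 0,
      IntermediateField.finiteDimensional_sup _ _, le_sup_left, ?_, ?_⟩
    · intro a ha b hb
      simp only [dif_pos ha, dif_pos hb]
      have h3 := hdist (e ⟨a, ha⟩) (e ⟨b, hb⟩)
      have h4 : pt (e ⟨a, ha⟩) = a := by rw [hptdef]; simp
      have h5 : pt (e ⟨b, hb⟩) = b := by rw [hptdef]; simp
      rwa [h4, h5] at h3
    · intro a ha k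
      simp only [dif_pos ha]
      exact SetLike.le_def.mp le_sup_right
        (IntermediateField.subset_adjoin ℚ S ⟨(e ⟨a, ha⟩, k), rfl⟩)
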